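/- Comparison lemma for the coupled fluid system: let φ̄, f : [0,1] → ℝ with f(x) ≤ φ̄(x) for all x, and let (Z_0, Z_1) and (F_0, F_1) be differentiable solutions of Z_0' = λ_0 − μ_0 φ̄(Z_0/(Z_0+Z_1)), Z_1' = λ_1 − μ_1 Z_1/(Z_0+Z_1), and F_0' = λ_0 − μ_0 f(F_0/(F_0+F_1)), F_1' = λ_1 − μ_1 F_1/(F_0+F_1), with Z_0(0) ≤ F_0(0), Z_1(0) ≤ F_1(0), f continuous nondecreasing, and all quantities positive. Then Z_0(t) ≤ F_0(t) and Z_1(t) ≤ F_1(t) for all t ≥ 0. -/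

import Mathlib

open Set Filter Topology

private lemma left_max_deriv_nonneg {h : ℝ → ℝ} {T d : ℝ} (hT : 0 < T)
    (hd : HasDerivAt h d T) (hmax : ∀ s, 0 ≤ s → s < T → h s ≤ h T) : 0 ≤ d := by
  have hd' : HasDerivWithinAt h d (Iio T) T := hd.hasDerivWithinAt
  rw [hasDerivWithinAt_iff_tendsto_slope] at hd'
  rw [diff_singleton_eq_self (by simp : T ∉ Iio T)] at hd'
  refine ge_of_tendsto hd' ?_
  filter_upwards [Ioo_mem_nhdsLT_of_mem (⟨hT, le_refl T⟩ : T ∈ Ioc 0 T)] with s hs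
  rw [slope_def_field]
  have h1 : h s - h T ≤ 0 := sub_nonpos.2 (hmax s hs.1.le hs.2)
  have h2 : s - T < 0 := sub_neg.2 hs.2
  rw [div_nonneg_iff]
  exact Or.inr ⟨h1, h2.le⟩

private lemma contradiction_core {ε Ex K Fv G d B δ : ℝ} (hε : 0 < ε) (hE : 0 < Ex)
    (hK : 0 < K) (hδ : δ ≤ G) (hKδ : K * δ = B + 1) (hB : -B ≤ Fv)
    (hd : d ≤ Fv - ε * (Ex * K) * G - (1 + ε * Ex) * Fv) : d < 0 := by
  nlinarith [mul_pos hε hE, mul_le_mul_of_nonneg_left hδ hK.le]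

set_option maxHeartbeats 1000000 in
theorem fluid_comparison (lam0 lam1 mu0 mu1 : ℝ)
    (hl0 : 0 < lam0) (hl1 : 0 < lam1) (hm0 : 0 < mu0) (hm1 : 0 < mu1)
    (φ f : ℝ → ℝ) (hle : ∀ x ∈ Icc (0 : ℝ) 1, f x ≤ φ x)
    (hfcont : ContinuousOn f (Icc 0 1)) (hfmono : MonotoneOn f (Icc 0 1))
    (Z0 Z1 F0 F1 : ℝ → ℝ)
    (hZ0pos : ∀ t ≥ (0 : ℝ), 0 < Z0 t) (hZ1pos : ∀ t ≥ (0 : ℝ), 0 < Z1 t)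
    (hF0pos : ∀ t ≥ (0 : ℝ), 0 < F0 t) (hF1pos : ∀ t ≥ (0 : ℝ), 0 < F1 t)
    (hZ0 : ∀ t ≥ (0 : ℝ),
      HasDerivAt Z0 (lam0 - mu0 * φ (Z0 t / (Z0 t + Z1 t))) t)
    (hZ1 : ∀ t ≥ (0 : ℝ),
      HasDerivAt Z1 (lam1 - mu1 * (Z1 t / (Z0 t + Z1 t))) t)
    (hF0 : ∀ t ≥ (0 : ℝ),
      HasDerivAt F0 (lam0 - mu0 * f (F0 t / (F0 t + F1 t))) t)
    (hF1 : ∀ t ≥ (0 : ℝ),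
      HasDerivAt F1 (lam1 - mu1 * (F1 t / (F0 t + F1 t))) t)
    (hinit0 : Z0 0 ≤ F0 0) (hinit1 : Z1 0 ≤ F1 0) :
    ∀ t ≥ (0 : ℝ), Z0 t ≤ F0 t ∧ Z1 t ≤ F1 t := by
  intro A hA
  -- continuity facts
  have hZ0ca : ∀ s ∈ Icc (0:ℝ) A, ContinuousAt Z0 s := fun s hs => (hZ0 s hs.1).continuousAt
  have hZ1ca : ∀ s ∈ Icc (0:ℝ) A, ContinuousAt Z1 s := fun s hs => (hZ1 s hs.1).continuousAt
  have hF0ca : ∀ s ∈ Icc (0:ℝ) A, ContinuousAt F0 s := fun s hs => (hF0 s hs.1).continuousAt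
  have hF1ca : ∀ s ∈ Icc (0:ℝ) A, ContinuousAt F1 s := fun s hs => (hF1 s hs.1).continuousAt
  -- minimum of F0, F1 on [0, A]
  have hne : (Icc (0:ℝ) A).Nonempty := ⟨0, le_refl 0, hA⟩
  obtain ⟨x0, hx0, hmin0⟩ := isCompact_Icc.exists_isMinOn hne
    (fun s hs => (hF0ca s hs).continuousWithinAt)
  obtain ⟨x1, hx1, hmin1⟩ := isCompact_Icc.exists_isMinOn hne
    (fun s hs => (hF1ca s hs).continuousWithinAt)
  set δ : ℝ := min (F0 x0) (F1 x1) with hδdef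
  have hδpos : 0 < δ := lt_min (hF0pos x0 hx0.1) (hF1pos x1 hx1.1)
  have hδ0 : ∀ s ∈ Icc (0:ℝ) A, δ ≤ F0 s := fun s hs =>
    (min_le_left _ _).trans (hmin0 hs)
  have hδ1 : ∀ s ∈ Icc (0:ℝ) A, δ ≤ F1 s := fun s hs =>
    (min_le_right _ _).trans (hmin1 hs)
  set B : ℝ := max (max (mu0 * f 1 - lam0) (mu1 - lam1)) 0 with hBdef
  have hB0 : 0 ≤ B := le_max_right _ _
  set K : ℝ := (B + 1) / δ with hKdef
  have hKpos : 0 < K := div_pos (by linarith) hδpos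
  have hKδ : K * δ = B + 1 := div_mul_cancel₀ _ hδpos.ne'
  -- key strict bound with perturbation
  have key : ∀ ε > (0:ℝ), ∀ s ∈ Icc (0:ℝ) A,
      Z0 s < (1 + ε * Real.exp (K * s)) * F0 s ∧
      Z1 s < (1 + ε * Real.exp (K * s)) * F1 s := by
    intro ε hε
    set c : ℝ → ℝ := fun s => 1 + ε * Real.exp (K * s) with hcdef
    have hc1 : ∀ s, 1 < c s := fun s => by
      have := Real.exp_pos (K * s)
      simp only [hcdef, lt_add_iff_pos_right]
      positivity
    have hcpos : ∀ s, 0 < c s := fun s => lt_trans one_pos (hc1 s)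
    have hccont : Continuous c :=
      continuous_const.add (continuous_const.mul
        (Real.continuous_exp.comp (continuous_const.mul continuous_id)))
    set g0 : ℝ → ℝ := fun s => Z0 s - c s * F0 s with hg0def
    set g1 : ℝ → ℝ := fun s => Z1 s - c s * F1 s with hg1def
    have hg0ca : ∀ s ∈ Icc (0:ℝ) A, ContinuousAt g0 s := fun s hs =>
      (hZ0ca s hs).sub ((hccont.continuousAt).mul (hF0ca s hs))
    have hg1ca : ∀ s ∈ Icc (0:ℝ) A, ContinuousAt g1 s := fun s hs =>
      (hZ1ca s hs).sub ((hccont.continuousAt).mul (hF1ca s hs))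
    by_contra hbad
    push_neg at hbad
    set E : Set ℝ := {s ∈ Icc (0:ℝ) A | 0 ≤ max (g0 s) (g1 s)} with hEdef
    have hEne : E.Nonempty := by
      obtain ⟨s, hs, hs'⟩ := hbad
      refine ⟨s, hs, le_max_iff.2 ?_⟩
      by_cases h0 : Z0 s < (1 + ε * Real.exp (K * s)) * F0 s
      · exact Or.inr (by have := hs' h0; simp only [hg1def, hcdef]; linarith)
      · exact Or.inl (by push_neg at h0; simp only [hg0def, hcdef]; linarith)
    have hEsub : E ⊆ Icc 0 A := fun s hs => hs.1
    have hEbdd : BddBelow E := ⟨0, fun s hs => hs.1.1⟩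
    have hEclosed : IsClosed E := by
      rw [← closure_subset_iff_isClosed]
      intro x hx
      have hxIcc : x ∈ Icc (0:ℝ) A := isClosed_Icc.closure_subset (closure_mono hEsub hx)
      haveI hnb : (𝓝[E] x).NeBot := mem_closure_iff_nhdsWithin_neBot.1 hx
      have hg : ContinuousAt (fun s => max (g0 s) (g1 s)) x :=
        (hg0ca x hxIcc).max (hg1ca x hxIcc)
      refine ⟨hxIcc, ?_⟩
      refine ge_of_tendsto ((hg.continuousWithinAt (s := E)).tendsto) ?_
      filter_upwards [self_mem_nhdsWithin] with s hs
      exact hs.2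
    set T : ℝ := sInf E with hTdef
    have hTE : T ∈ E := hEclosed.csInf_mem hEne hEbdd
    have hTIcc : T ∈ Icc (0:ℝ) A := hTE.1
    have h0notE : (0:ℝ) ∉ E := by
      intro h0
      have h1 : g0 0 < 0 := by
        have := hF0pos 0 (le_refl 0)
        have := hc1 0
        simp only [hg0def]
        nlinarith
      have h2 : g1 0 < 0 := by
        have := hF1pos 0 (le_refl 0)
        have := hc1 0
        simp only [hg1def]
        nlinarith
      have := h0.2
      rcases le_max_iff.1 this with h | h <;> linarith
    have hTpos : 0 < T := lt_of_le_of_ne hTIcc.1 (fun h => h0notE (h ▸ hTE))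
    -- strict inequalities on [0, T)
    have hlt : ∀ s, 0 ≤ s → s < T → g0 s < 0 ∧ g1 s < 0 := by
      intro s hs0 hsT
      have hsIcc : s ∈ Icc (0:ℝ) A := ⟨hs0, hsT.le.trans hTIcc.2⟩
      have hsE : s ∉ E := fun hsE => absurd (csInf_le hEbdd hsE) (not_le.2 hsT)
      have : ¬ (0 ≤ max (g0 s) (g1 s)) := fun h => hsE ⟨hsIcc, h⟩
      push_neg at this
      exact ⟨lt_of_le_of_lt (le_max_left _ _) this, lt_of_le_of_lt (le_max_right _ _) this⟩
    -- weak inequalities at T by continuity from the left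
    have hleT : g0 T ≤ 0 ∧ g1 T ≤ 0 := by
      haveI : (𝓝[<] T).NeBot := nhdsLT_neBot T
      constructor
      · refine le_of_tendsto ((hg0ca T hTIcc).continuousWithinAt.tendsto (s := Iio T)) ?_
        filter_upwards [Ioo_mem_nhdsLT_of_mem (⟨hTpos, le_refl T⟩ : T ∈ Ioc 0 T)] with s hs
        exact (hlt s hs.1.le hs.2).1.le
      · refine le_of_tendsto ((hg1ca T hTIcc).continuousWithinAt.tendsto (s := Iio T)) ?_
        filter_upwards [Ioo_mem_nhdsLT_of_mem (⟨hTpos, le_refl T⟩ : T ∈ Ioc 0 T)] with s hs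
        exact (hlt s hs.1.le hs.2).2.le
    -- useful positivity at T
    have hZ0T := hZ0pos T hTIcc.1
    have hZ1T := hZ1pos T hTIcc.1
    have hF0T := hF0pos T hTIcc.1
    have hF1T := hF1pos T hTIcc.1
    have hcT := hcpos T
    have hET := Real.exp_pos (K * T)
    -- ratios
    set Zr : ℝ := Z0 T / (Z0 T + Z1 T) with hZrdef
    set Zq : ℝ := Z1 T / (Z0 T + Z1 T) with hZqdef
    set Fr : ℝ := F0 T / (F0 T + F1 T) with hFrdef
    set Fq : ℝ := F1 T / (F0 T + F1 T) with hFqdef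
    have hZsum : 0 < Z0 T + Z1 T := by linarith
    have hFsum : 0 < F0 T + F1 T := by linarith
    have hZrI : Zr ∈ Icc (0:ℝ) 1 :=
      ⟨div_nonneg hZ0T.le hZsum.le, (div_le_one hZsum).2 (by linarith)⟩
    have hZqI : Zq ∈ Icc (0:ℝ) 1 :=
      ⟨div_nonneg hZ1T.le hZsum.le, (div_le_one hZsum).2 (by linarith)⟩
    have hFrI : Fr ∈ Icc (0:ℝ) 1 :=
      ⟨div_nonneg hF0T.le hFsum.le, (div_le_one hFsum).2 (by linarith)⟩
    have hFqI : Fq ∈ Icc (0:ℝ) 1 :=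
      ⟨div_nonneg hF1T.le hFsum.le, (div_le_one hFsum).2 (by linarith)⟩
    have h1I : (1:ℝ) ∈ Icc (0:ℝ) 1 := ⟨zero_le_one, le_refl 1⟩
    -- derivative of c at T
    have hcderiv : HasDerivAt c (ε * (Real.exp (K * T) * K)) T := by
      have h1 : HasDerivAt (fun s : ℝ => K * s) K T := by
        simpa using (hasDerivAt_id T).const_mul K
      have h2 : HasDerivAt (fun s : ℝ => Real.exp (K * s)) (Real.exp (K * T) * K) T :=
        (Real.hasDerivAt_exp (K * T)).comp T h1
      exact (h2.const_mul ε).const_add 1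
    -- two cases: g0 T = 0 or g1 T = 0
    have hcase : g0 T = 0 ∨ g1 T = 0 := by
      rcases le_max_iff.1 hTE.2 with h | h
      · exact Or.inl (le_antisymm hleT.1 h)
      · exact Or.inr (le_antisymm hleT.2 h)
    rcases hcase with hg0T | hg1T
    · -- Z0 touches c * F0
      have hZ0eq : Z0 T = c T * F0 T := by
        have := hg0T; simp only [hg0def] at this; linarith
      have hZ1le : Z1 T ≤ c T * F1 T := by
        have := hleT.2; simp only [hg1def] at this; linarith
      -- ratio comparison : Fr ≤ Zr
      have hratio : Fr ≤ Zr := by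
        rw [hFrdef, hZrdef, div_le_div_iff₀ hFsum hZsum]
        nlinarith
      -- derivative comparison
      have hφ : f Fr ≤ φ Zr := (hfmono hFrI hZrI hratio).trans (hle Zr hZrI)
      have hd : HasDerivAt g0
          ((lam0 - mu0 * φ Zr) -
            (ε * (Real.exp (K * T) * K) * F0 T + c T * (lam0 - mu0 * f Fr))) T := by
        exact (hZ0 T hTIcc.1).sub (hcderiv.mul (hF0 T hTIcc.1))
      have hdn : 0 ≤ (lam0 - mu0 * φ Zr) -
          (ε * (Real.exp (K * T) * K) * F0 T + c T * (lam0 - mu0 * f Fr)) := by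
        refine left_max_deriv_nonneg hTpos hd ?_
        intro s hs0 hsT
        rw [hg0T]
        exact ((hlt s hs0 hsT).1).le
      have hcontra : (lam0 - mu0 * φ Zr) -
          (ε * (Real.exp (K * T) * K) * F0 T + c T * (lam0 - mu0 * f Fr)) < 0 := by
        refine contradiction_core (Fv := lam0 - mu0 * f Fr) hε hET hKpos (hδ0 T hTIcc) hKδ ?_ ?_
        · -- -B ≤ lam0 - mu0 * f Fr
          have hf1 : f Fr ≤ f 1 := hfmono hFrI h1I hFrI.2
          have : mu0 * f 1 - lam0 ≤ B := (le_max_left _ _).trans (le_max_left _ _)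
          nlinarith
        · -- the arithmetic bound
          have h1 : lam0 - mu0 * φ Zr ≤ lam0 - mu0 * f Fr := by nlinarith
          simp only [hcdef]
          clear_value Zr Fr
          linarith
      linarith
    · -- Z1 touches c * F1
      have hZ1eq : Z1 T = c T * F1 T := by
        have := hg1T; simp only [hg1def] at this; linarith
      have hZ0le : Z0 T ≤ c T * F0 T := by
        have := hleT.1; simp only [hg0def] at this; linarith
      have hratio : Fq ≤ Zq := by
        rw [hFqdef, hZqdef, div_le_div_iff₀ hFsum hZsum]
        nlinarith
      have hd : HasDerivAt g1
          ((lam1 - mu1 * Zq) -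
            (ε * (Real.exp (K * T) * K) * F1 T + c T * (lam1 - mu1 * Fq))) T := by
        exact (hZ1 T hTIcc.1).sub (hcderiv.mul (hF1 T hTIcc.1))
      have hdn : 0 ≤ (lam1 - mu1 * Zq) -
          (ε * (Real.exp (K * T) * K) * F1 T + c T * (lam1 - mu1 * Fq)) := by
        refine left_max_deriv_nonneg hTpos hd ?_
        intro s hs0 hsT
        rw [hg1T]
        exact ((hlt s hs0 hsT).2).le
      have hcontra : (lam1 - mu1 * Zq) -
          (ε * (Real.exp (K * T) * K) * F1 T + c T * (lam1 - mu1 * Fq)) < 0 := by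
        refine contradiction_core (Fv := lam1 - mu1 * Fq) hε hET hKpos (hδ1 T hTIcc) hKδ ?_ ?_
        · have : mu1 - lam1 ≤ B := (le_max_right _ _).trans (le_max_left _ _)
          have := hFqI.2
          nlinarith
        · have h1 : lam1 - mu1 * Zq ≤ lam1 - mu1 * Fq := by nlinarith
          simp only [hcdef]
          clear_value Zq Fq
          linarith
      linarith
  -- conclude by letting ε → 0
  have hAI : A ∈ Icc (0:ℝ) A := ⟨hA, le_refl A⟩
  have hF0A := hF0pos A hA
  have hF1A := hF1pos A hA
  have hEA := Real.exp_pos (K * A)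
  constructor
  · refine le_of_forall_pos_le_add ?_
    intro η hη
    have hε : 0 < η / (Real.exp (K * A) * F0 A) := div_pos hη (by positivity)
    have h1 := (key _ hε A hAI).1
    have hexp : (1 + η / (Real.exp (K * A) * F0 A) * Real.exp (K * A)) * F0 A
        = F0 A + η := by
      field_simp
    linarith [h1, hexp.le, hexp.ge]
  · refine le_of_forall_pos_le_add ?_
    intro η hη
    have hε : 0 < η / (Real.exp (K * A) * F1 A) := div_pos hη (by positivity)
    have h1 := (key _ hε A hAI).2
    have hexp : (1 + η / (Real.exp (K * A) * F1 A) * Real.exp (K * A)) * F1 A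
        = F1 A + η := by
      field_simp
    linarith [h1, hexp.le, hexp.ge]
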